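/- Let $H(x) = -x \log_2 x - (1-x)\log_2(1-x)$ be the binary entropy function and let $d_1 \ge 160$ and $d_2 \ge 4$ be integers. Then for all $\alpha \in (0, 1/d_2^2]$, $2H(\alpha) + \frac{d_1}{8}\alpha \log_2(2 d_2 \alpha) \le \alpha \log_2(\alpha)\left(\frac{d_1}{32} - 4\right)$. -/

import Mathlib

theorem stmt_18 (d1 d2 : ℕ) (h1 : 160 ≤ d1) (h2 : 4 ≤ d2) (α : ℝ)
    (hα0 : 0 < α) (hα : α ≤ 1 / (d2 : ℝ) ^ 2) :
    2 * (-α * Real.logb 2 α - (1 - α) * Real.logb 2 (1 - α)) +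
        (d1 : ℝ) / 8 * α * Real.logb 2 (2 * d2 * α) ≤
      α * Real.logb 2 α * ((d1 : ℝ) / 32 - 4) := by
  have hb : (1:ℝ) < 2 := one_lt_two
  have hd2 : (4:ℝ) ≤ (d2:ℝ) := by exact_mod_cast h2
  have hd1 : (160:ℝ) ≤ (d1:ℝ) := by exact_mod_cast h1
  have h16 : α ≤ 1/16 := le_trans hα (by rw [div_le_div_iff₀ (by positivity) (by norm_num)]; nlinarith)
  set L := Real.logb 2 α with hLdef
  have hL4 : L ≤ -4 := by
    rw [hLdef, Real.logb_le_iff_le_rpow hb hα0]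
    rw [show ((-4:ℝ)) = ((-4:ℤ):ℝ) by norm_num, Real.rpow_intCast]
    norm_num; linarith
  -- bound on logb 2 d2
  have hd2a : (d2:ℝ)^2 ≤ 1/α := by
    rw [le_div_iff₀ hα0]
    calc (d2:ℝ)^2 * α ≤ (d2:ℝ)^2 * (1/(d2:ℝ)^2) := by
          apply mul_le_mul_of_nonneg_left hα (by positivity)
      _ = 1 := by field_simp
  have hlogd2 : Real.logb 2 (d2:ℝ) ≤ -L/2 := by
    have h1' : Real.logb 2 ((d2:ℝ)^2) ≤ Real.logb 2 (1/α) :=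
      Real.logb_le_logb_of_le hb (by positivity) hd2a
    have h2' : Real.logb 2 ((d2:ℝ)^2) = 2 * Real.logb 2 (d2:ℝ) := by
      rw [Real.logb_pow]; norm_num
    have h3' : Real.logb 2 (1/α) = -L := by rw [one_div, Real.logb_inv]
    rw [h2', h3'] at h1'; linarith
  have hmain : Real.logb 2 (2 * d2 * α) ≤ L/4 := by
    have hne : (2 * (d2:ℝ)) ≠ 0 := by positivity
    rw [Real.logb_mul hne (ne_of_gt hα0), Real.logb_mul (by norm_num) (by positivity)]
    have : Real.logb 2 (2:ℝ) = 1 := by simp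
    rw [this]
    linarith
  have hent : -((1 - α) * Real.logb 2 (1 - α)) ≤ 2 * α := by
    have h1a : (0:ℝ) < 1 - α := by linarith
    have hlog : -α/(1-α) ≤ Real.log (1 - α) := by
      have := Real.one_sub_inv_le_log_of_pos h1a
      have : 1 - (1-α)⁻¹ ≤ Real.log (1-α) := this
      have he : 1 - (1-α)⁻¹ = -α/(1-α) := by field_simp; ring
      linarith [he ▸ this]
    have hlog2 : (0.6931:ℝ) < Real.log 2 := by
      have := Real.log_two_gt_d9; linarith
    rw [Real.logb, div_eq_mul_inv]
    have hinv : (Real.log 2)⁻¹ ≤ 2 := by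
      rw [inv_le_comm₀ (by linarith) (by norm_num)]; linarith
    have key : -((1-α) * Real.log (1-α)) ≤ α := by
      have : (1-α) * (-α/(1-α)) ≤ (1-α) * Real.log (1-α) :=
        mul_le_mul_of_nonneg_left hlog (le_of_lt h1a)
      have he : (1-α) * (-α/(1-α)) = -α := by field_simp
      linarith [he ▸ this]
    calc -((1-α) * (Real.log (1-α) * (Real.log 2)⁻¹))
        = (-((1-α) * Real.log (1-α))) * (Real.log 2)⁻¹ := by ring
      _ ≤ α * (Real.log 2)⁻¹ := by
          apply mul_le_mul_of_nonneg_right key (by positivity)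
      _ ≤ α * 2 := mul_le_mul_of_nonneg_left hinv (le_of_lt hα0)
      _ = 2 * α := by ring
  have hcoef : (0:ℝ) ≤ (d1:ℝ)/8 * α := by positivity
  have hterm : (d1:ℝ)/8 * α * Real.logb 2 (2 * d2 * α) ≤ (d1:ℝ)/8 * α * (L/4) :=
    mul_le_mul_of_nonneg_left hmain hcoef
  nlinarith [mul_le_mul_of_nonneg_left hL4 (le_of_lt hα0)]
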